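/- Let S ⊆ ℍ have the full cone property. Then there exist α > 0 and a rotation R of ℝ³ around the z-axis such that R(S) has the α-flat cone property. -/

import Mathlib

open Set

noncomputable section

/-- The first Heisenberg group as ℝ³. -/
abbrev H : Type := ℝ × ℝ × ℝ

/-- Heisenberg group multiplication. -/
def Hmul (p q : H) : H :=
  (p.1 + q.1, p.2.1 + q.2.1, p.2.2 + q.2.2 + (p.1 * q.2.1 - q.1 * p.2.1) / 2)

/-- Heisenberg group inverse. -/
def Hinv (p : H) : H := (-p.1, -p.2.1, -p.2.2)

/-- Left translation of a set: `pE = {pe : e ∈ E}`. -/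
def LTrans (p : H) (E : Set H) : Set H := Hmul p '' E

/-- The α-flat cone `fC(α) = {(x,y,0) : |y| < α|x|}`. -/
def fC (α : ℝ) : Set H := {p | |p.2.1| < α * |p.1| ∧ p.2.2 = 0}

/-- The α-full cone `C(α) = {(x,y,z) : |y| < α|x|, |z| < αx²/2}`. -/
def fullC (α : ℝ) : Set H := {p | |p.2.1| < α * |p.1| ∧ |p.2.2| < α * p.1 ^ 2 / 2}

/-- The truncated full cone `C(β,r)`. -/
def truncC (β r : ℝ) : Set H :=
  {p | |p.2.1| < β * |p.1| ∧ |p.2.2| < β * p.1 ^ 2 / 2 ∧ |p.1| < r}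

/-- The vertical set `vC(β,r) = {(x,0,ux²/2) : |u| < β, |x| < r}`. -/
def vC (β r : ℝ) : Set H :=
  {p | ∃ u x : ℝ, |u| < β ∧ |x| < r ∧ p = (x, 0, u * x ^ 2 / 2)}

/-- The shear map `M_t(x,y,z) = (x, y + tx, z)`. -/
def Mmap (t : ℝ) (p : H) : H := (p.1, p.2.1 + t * p.1, p.2.2)

/-- The projection `π(x,y,z) = (y, z + xy/2)`. -/
def proj (p : H) : ℝ × ℝ := (p.2.1, p.2.2 + p.1 * p.2.1 / 2)

/-- The intrinsic graph of `φ` over `Ω`. -/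
def IGraph (Ω : Set (ℝ × ℝ)) (φ : ℝ × ℝ → ℝ) : Set H :=
  (fun w => (φ w, w.1, w.2 - w.1 * φ w / 2)) '' Ω

/-- The α-flat cone property. -/
def FlatConeProp (α : ℝ) (S : Set H) : Prop :=
  ∀ p ∈ S, fC α ∩ LTrans (Hinv p) S = ∅

/-- A topological surface: every point of `S` has an open neighborhood in `S`
homeomorphic to `ℝ²`. -/
def IsTopSurface (S : Set H) : Prop :=
  ∀ p : S, ∃ U : Set S, IsOpen U ∧ p ∈ U ∧ Nonempty (U ≃ₜ (ℝ × ℝ))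

/-- Dilations `δ_λ(x,y,z) = (λx, λy, λ²z)`. -/
def dil (l : ℝ) (p : H) : H := (l * p.1, l * p.2.1, l ^ 2 * p.2.2)

/-- A cone is a set invariant under all dilations. -/
def IsCone (E : Set H) : Prop := ∀ l : ℝ, 0 < l → dil l '' E = E

/-- Rotation around the z-axis by angle θ. -/
def Rot (θ : ℝ) (p : H) : H :=
  (p.1 * Real.cos θ - p.2.1 * Real.sin θ, p.1 * Real.sin θ + p.2.1 * Real.cos θ, p.2.2)

lemma rot_rot (θ : ℝ) (p : H) : Rot (-θ) (Rot θ p) = p := by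
  obtain ⟨x, y, z⟩ := p
  have h := Real.sin_sq_add_cos_sq θ
  simp only [Rot, Real.cos_neg, Real.sin_neg, Prod.mk.injEq]
  refine ⟨by linear_combination x * h, by linear_combination y * h, trivial⟩

lemma rot_rot' (θ : ℝ) (p : H) : Rot θ (Rot (-θ) p) = p := by
  have := rot_rot (-θ) p; rwa [neg_neg] at this

lemma rot_mul (θ : ℝ) (p q : H) : Rot θ (Hmul p q) = Hmul (Rot θ p) (Rot θ q) := by
  obtain ⟨x, y, z⟩ := p; obtain ⟨x', y', z'⟩ := q
  have h := Real.sin_sq_add_cos_sq θ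
  simp only [Rot, Hmul, Prod.mk.injEq]
  refine ⟨by ring, by ring, by linear_combination (-(x * y' - x' * y) / 2) * h⟩

lemma rot_inv (θ : ℝ) (p : H) : Rot θ (Hinv p) = Hinv (Rot θ p) := by
  obtain ⟨x, y, z⟩ := p
  simp only [Rot, Hinv, Prod.mk.injEq]
  refine ⟨by ring, by ring, trivial⟩

lemma rot_neg (θ : ℝ) (p : H) : Rot θ (-p) = -(Rot θ p) := by
  obtain ⟨x, y, z⟩ := p
  simp only [Rot, Prod.neg_mk, Prod.mk.injEq]
  refine ⟨by ring, by ring, trivial⟩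

lemma rot_dil (θ l : ℝ) (p : H) : Rot θ (dil l p) = dil l (Rot θ p) := by
  obtain ⟨x, y, z⟩ := p
  simp only [Rot, dil, Prod.mk.injEq]
  refine ⟨by ring, by ring, trivial⟩

lemma rot_cont (θ : ℝ) : Continuous (Rot θ) := by
  unfold Rot; fun_prop

theorem stmt11 (S : Set H)
    (h : ∃ C : Set H, IsOpen C ∧ IsCone C ∧ (∀ p : H, p ∈ C ↔ -p ∈ C) ∧
      (C ∩ {p : H | p.2.2 = 0}).Nonempty ∧ ∀ p ∈ S, C ∩ LTrans (Hinv p) S = ∅) :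
    ∃ α > 0, ∃ θ : ℝ, FlatConeProp α (Rot θ '' S) := by
  obtain ⟨C, hCo, hCc, hCsym, ⟨q, hqC, hqz⟩, hCS⟩ := h
  by_cases hS : S = ∅
  · refine ⟨1, one_pos, 0, ?_⟩
    intro p hp
    simp [hS] at hp
  obtain ⟨p0, hp0⟩ := Set.nonempty_iff_ne_empty.mpr hS
  obtain ⟨a, b, z0⟩ := q
  have hz0 : z0 = 0 := hqz
  subst hz0
  have hq0 : ¬ (a = 0 ∧ b = 0) := by
    rintro ⟨h1, h2⟩
    subst h1; subst h2
    have hmem : ((0:ℝ), (0:ℝ), (0:ℝ)) ∈ C ∩ LTrans (Hinv p0) S := by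
      refine ⟨hqC, p0, hp0, ?_⟩
      obtain ⟨x, y, z⟩ := p0
      simp only [Hmul, Hinv, Prod.mk.injEq]
      refine ⟨by ring, by ring, by ring⟩
    rw [hCS p0 hp0] at hmem
    exact hmem
  set r := Real.sqrt (a ^ 2 + b ^ 2) with hrdef
  have habne : a ^ 2 + b ^ 2 ≠ 0 := by
    intro hc
    exact hq0 ⟨by nlinarith [sq_nonneg a, sq_nonneg b], by nlinarith [sq_nonneg a, sq_nonneg b]⟩
  have hr : 0 < r := Real.sqrt_pos.mpr (lt_of_le_of_ne (by positivity) (Ne.symm habne))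
  have hr2 : r ^ 2 = a ^ 2 + b ^ 2 := Real.sq_sqrt (by positivity)
  set zc : ℂ := ⟨a, b⟩ with hzc
  have hzne : zc ≠ 0 := by
    intro hc
    rw [Complex.ext_iff] at hc
    simp only [hzc, Complex.zero_re, Complex.zero_im] at hc
    exact hq0 hc
  have habs : ‖zc‖ = r := by
    rw [Complex.norm_def, hrdef]
    have : Complex.normSq zc = a ^ 2 + b ^ 2 := by
      simp [hzc, Complex.normSq_mk]; ring
    rw [this]
  set θ := -Complex.arg zc with hθ
  have hcos : Real.cos θ = a / r := by
    rw [hθ, Real.cos_neg, Complex.cos_arg hzne, habs]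
  have hsin : Real.sin θ = -(b / r) := by
    rw [hθ, Real.sin_neg, Complex.sin_arg, habs]
  set C' := Rot θ '' C with hC'
  have hC'eq : C' = Rot (-θ) ⁻¹' C := by
    ext w
    constructor
    · rintro ⟨c, hc, rfl⟩
      simpa [rot_rot] using hc
    · intro hw
      exact ⟨Rot (-θ) w, hw, rot_rot' θ w⟩
  have hC'o : IsOpen C' := hC'eq ▸ hCo.preimage (rot_cont (-θ))
  have hC'cone : IsCone C' := by
    intro l hl
    rw [hC', Set.image_image]
    have heq : (fun x => dil l (Rot θ x)) = fun x => Rot θ (dil l x) := by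
      funext x; rw [rot_dil]
    rw [heq, ← Set.image_image, hCc l hl]
  have hC'sym : ∀ p : H, p ∈ C' → -p ∈ C' := by
    rintro p ⟨c, hc, rfl⟩
    exact ⟨-c, (hCsym c).mp hc, rot_neg θ c⟩
  have hmemC' : ((r : ℝ), (0 : ℝ), (0 : ℝ)) ∈ C' := by
    refine ⟨(a, b, 0), hqC, ?_⟩
    simp only [Rot, hcos, hsin, Prod.mk.injEq]
    refine ⟨?_, by ring, trivial⟩
    have h1 : a * (a / r) - b * -(b / r) = (a ^ 2 + b ^ 2) / r := by ring
    rw [h1, ← hr2, sq, mul_div_assoc, div_self hr.ne', mul_one]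
  obtain ⟨ε, hε, hball⟩ := Metric.isOpen_iff.mp hC'o _ hmemC'
  set α := ε / (2 * r) with hα
  have hαpos : 0 < α := by positivity
  have key : ∀ x y : ℝ, 0 < x → |y| < α * x → ((x, y, (0:ℝ)) : H) ∈ C' := by
    intro x y hx hy
    have hp1 : ((r, r * y / x, (0:ℝ)) : H) ∈ C' := by
      apply hball
      simp only [Metric.mem_ball, Prod.dist_eq, Real.dist_eq]
      have h1 : |r * y / x| < ε := by
        rw [abs_div, abs_mul, abs_of_pos hr, abs_of_pos hx, div_lt_iff₀ hx]
        calc r * |y| < r * (α * x) := mul_lt_mul_of_pos_left hy hr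
          _ = ε / 2 * x := by rw [hα]; field_simp
          _ ≤ ε * x := by nlinarith
      simp only [sub_self, abs_zero, sub_zero]
      rw [max_lt_iff, max_lt_iff]
      exact ⟨hε, h1, hε⟩
    have hl : 0 < x / r := by positivity
    rw [← hC'cone (x / r) hl]
    refine ⟨(r, r * y / x, (0:ℝ)), hp1, ?_⟩
    simp only [dil, Prod.mk.injEq]
    refine ⟨by field_simp, ?_, by ring⟩
    field_simp
  have hsub : fC α ⊆ C' := by
    rintro ⟨x, y, z⟩ ⟨hy, hz0⟩
    simp only at hy hz0
    subst hz0
    rcases lt_trichotomy x 0 with hx | hx | hx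
    · have hmem : ((-x, -y, (0:ℝ)) : H) ∈ C' := by
        apply key _ _ (by linarith)
        rw [abs_neg]
        calc |y| < α * |x| := hy
          _ = α * (-x) := by rw [abs_of_neg hx]
      have := hC'sym _ hmem
      simpa using this
    · exfalso
      subst hx
      simp only [abs_zero, mul_zero] at hy
      exact absurd hy (not_lt.mpr (abs_nonneg y))
    · apply key _ _ hx
      rwa [abs_of_pos hx] at hy
  refine ⟨α, hαpos, θ, ?_⟩
  rintro p' ⟨p, hpS, rfl⟩
  ext w
  simp only [Set.mem_inter_iff, Set.mem_empty_iff_false, iff_false, not_and]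
  intro hw1 hw2
  obtain ⟨s', ⟨s, hsS, rfl⟩, hws⟩ := hw2
  have hw : w = Rot θ (Hmul (Hinv p) s) := by
    rw [rot_mul, rot_inv]; exact hws.symm
  obtain ⟨c, hcC, hcw⟩ := hsub hw1
  have hceq : c = Hmul (Hinv p) s := by
    have h3 : Rot θ c = Rot θ (Hmul (Hinv p) s) := by rw [hcw, hw]
    have h2 := congrArg (Rot (-θ)) h3
    rwa [rot_rot, rot_rot] at h2
  have hmem : Hmul (Hinv p) s ∈ C ∩ LTrans (Hinv p) S :=
    ⟨hceq ▸ hcC, s, hsS, rfl⟩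
  rw [hCS p hpS] at hmem
  exact hmem
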